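/- The subset U(H, A) of GL(H, A) consisting of elements additionally satisfying the unitarity condition a(g₍₁₎)(a(S(g₍₂₎)*))* = ε(g)1_A is a subgroup of GL(H, A): it is closed under convolution and under inversion. -/
import Mathlib


open scoped TensorProduct

/-- A choice of a finite "Sweedler representation" of the comultiplication:
`Δ g = ∑ₚ p.1 ⊗ p.2` where `p` ranges over the list `rep g`. -/
structure SweedlerRep (C H : Type*) [CommSemiring C] [AddCommMonoid H] [Module C H]
    [CoalgebraStruct C H] where
  rep : H → List (H × H)
  rep_spec : ∀ g : H,
    Coalgebra.comul (R := C) g = ((rep g).map fun p => p.1 ⊗ₜ[C] p.2).sum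

section GLGroup

variable {C H A : Type*} [CommRing C] [StarRing C]
  [Ring H] [HopfAlgebra C H] [StarRing H] [StarModule C H]
  [Ring A] [Algebra C A] [StarRing A] [StarModule C A]

/-- The convolution product on `Hom(H, A)`: `(a * b)(g) = a(g₍₁₎) b(g₍₂₎)`. -/
def conv (Δ : SweedlerRep C H) (a b : H → A) : H → A :=
  fun g => ((Δ.rep g).map fun p => a p.1 * b p.2).sum

/-- The convolution unit `e(g) = ε(g)·1`. -/
def convUnit (C : Type*) {H : Type*} [CommRing C] [AddCommGroup H] [Module C H]
    [CoalgebraStruct C H] (A : Type*) [Ring A] [Algebra C A] : H → A :=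
  fun g => Coalgebra.counit (R := C) g • (1 : A)

/-- Membership in `GL(H, A)`: a `C`-linear map `a : H → A` with (i) normalization
`a(1) = 1`, (ii) action condition `a(gh) = a(g₍₁₎)(g₍₂₎ ▷ a(h))` and (iii) module
condition `(g₍₁₎ ▷ b) a(g₍₂₎) = a(g₍₁₎)(g₍₂₎ ▷ b)`. -/
def memGL (Δ : SweedlerRep C H) (act : H → A → A) (a : H → A) : Prop :=
  IsLinearMap C a ∧ a 1 = 1 ∧
  (∀ g h : H, a (g * h) = ((Δ.rep g).map fun p => a p.1 * act p.2 (a h)).sum) ∧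
  (∀ (g : H) (b : A),
    ((Δ.rep g).map fun p => act p.1 b * a p.2).sum
      = ((Δ.rep g).map fun p => a p.1 * act p.2 b).sum)

/-- The convolution inverse formula `a⁻¹(g) = g₍₂₎ ▷ a(S⁻¹(g₍₁₎))`. -/
def convInv (Δ : SweedlerRep C H) (act : H → A → A) (Sinv : H → H) (a : H → A) : H → A :=
  fun g => ((Δ.rep g).map fun p => act p.2 (a (Sinv p.1))).sum

end GLGroup

namespace SweedlerAux
set_option linter.unusedSectionVars false

noncomputable section

section Lists

variable {α β M : Type*} [AddCommMonoid M]

theorem msum_congr {l : List α} {f g : α → M} (h : ∀ x ∈ l, f x = g x) :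
    (l.map f).sum = (l.map g).sum := by
  rw [List.map_congr_left h]

theorem sum_comm' (l : List α) (m : List β) (f : α → β → M) :
    (l.map fun x => (m.map fun y => f x y).sum).sum
      = (m.map fun y => (l.map fun x => f x y).sum).sum := by
  induction l with
  | nil => simp
  | cons a t ih =>
      simp only [List.map_cons, List.sum_cons, ih, ← List.sum_map_add]

theorem sum_map_smul {γ : Type*} [DistribSMul γ M] (l : List α) (f : α → M) (c : γ) :
    (l.map fun i => c • f i).sum = c • (l.map f).sum := by
  rw [List.smul_sum, List.map_map]; rfl

theorem star_msum {A' : Type*} [AddCommMonoid A'] [StarAddMonoid A'] (l : List A') :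
    star l.sum = (l.map fun x => star x).sum := by
  induction l with
  | nil => simp
  | cons a t ih => simp [star_add, ih]

theorem sum_map_add' (l : List α) (f g : α → M) :
    (l.map fun x => f x + g x).sum = (l.map f).sum + (l.map g).sum := by
  induction l with
  | nil => simp
  | cons a t ih => simp [ih]; abel

end Lists

section Sums

variable {C H M : Type*} [CommRing C]
  [Ring H] [HopfAlgebra C H]
  [AddCommGroup M] [Module C M]
  (Δ : SweedlerRep C H)

/-- bilinear map out of tensor square -/
def bil₂ (f : H → H → M) (h1 : ∀ y, IsLinearMap C fun x => f x y)
    (h2 : ∀ x, IsLinearMap C fun y => f x y) : H ⊗[C] H →ₗ[C] M :=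
  TensorProduct.lift <| LinearMap.mk₂ C f
    (fun m n y => (h1 y).map_add m n) (fun c m y => (h1 y).map_smul c m)
    (fun x m n => (h2 x).map_add m n) (fun c x n => (h2 x).map_smul c n)

@[simp] theorem bil₂_tmul (f : H → H → M) (h1 h2) (x y : H) :
    bil₂ (C := C) f h1 h2 (x ⊗ₜ[C] y) = f x y := rfl

theorem rep_sum_lift (W : H ⊗[C] H →ₗ[C] M) (g : H) :
    ((Δ.rep g).map fun p => W (p.1 ⊗ₜ[C] p.2)).sum = W (Coalgebra.comul (R := C) g) := by
  rw [Δ.rep_spec g, map_list_sum, List.map_map]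
  rfl

/-- transport a rep-sum along a comul identity -/
theorem rep_trans {k : H} {L : List (H × H)}
    (hL : Coalgebra.comul (R := C) k = (L.map fun v => v.1 ⊗ₜ[C] v.2).sum)
    (f : H → H → M) (h1 : ∀ y, IsLinearMap C fun x => f x y)
    (h2 : ∀ x, IsLinearMap C fun y => f x y) :
    ((Δ.rep k).map fun p => f p.1 p.2).sum = (L.map fun v => f v.1 v.2).sum := by
  have := rep_sum_lift Δ (bil₂ (C := C) f h1 h2) k
  simp only [bil₂_tmul] at this
  rw [this, hL, map_list_sum, List.map_map]
  rfl

theorem lin_repsum (f : H → H → M) (h1 : ∀ y, IsLinearMap C fun x => f x y)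
    (h2 : ∀ x, IsLinearMap C fun y => f x y) :
    IsLinearMap C fun z => ((Δ.rep z).map fun p => f p.1 p.2).sum := by
  have h : ∀ z : H, ((Δ.rep z).map fun p => f p.1 p.2).sum
      = bil₂ (C := C) f h1 h2 (Coalgebra.comul (R := C) z) := by
    intro z
    have := rep_sum_lift Δ (bil₂ (C := C) f h1 h2) z
    simp only [bil₂_tmul] at this
    exact this.symm ▸ this
  simp only [h]
  exact ⟨fun x y => by rw [map_add, map_add], fun c x => by rw [map_smul, map_smul]⟩

end Sums

section Sums2

variable {C H M : Type*} [CommRing C]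
  [Ring H] [HopfAlgebra C H]
  [AddCommGroup M] [Module C M]
  (Δ : SweedlerRep C H)

/-- trilinear map out of the triple tensor -/
def tri₃ (F : H → H → H → M) (h1 : ∀ y z, IsLinearMap C fun x => F x y z)
    (h2 : ∀ x z, IsLinearMap C fun y => F x y z)
    (h3 : ∀ x y, IsLinearMap C fun z => F x y z) : (H ⊗[C] H) ⊗[C] H →ₗ[C] M :=
  TensorProduct.lift <| TensorProduct.lift <| LinearMap.mk₂ C
    (fun x y => IsLinearMap.mk' _ (h3 x y))
    (fun m n y => LinearMap.ext fun z => (h1 y z).map_add m n)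
    (fun c m y => LinearMap.ext fun z => (h1 y z).map_smul c m)
    (fun x m n => LinearMap.ext fun z => (h2 x z).map_add m n)
    (fun c x y => LinearMap.ext fun z => (h2 x z).map_smul c y)

@[simp] theorem tri₃_tmul (F : H → H → H → M) (h1 h2 h3) (x y z : H) :
    tri₃ (C := C) F h1 h2 h3 ((x ⊗ₜ[C] y) ⊗ₜ[C] z) = F x y z := rfl

theorem rep_sum_lift₂ (Φ : (H ⊗[C] H) ⊗[C] H →ₗ[C] M) (g : H) :
    ((Δ.rep g).map fun p =>
        ((Δ.rep p.1).map fun q => Φ ((q.1 ⊗ₜ[C] q.2) ⊗ₜ[C] p.2)).sum).sum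
      = Φ ((LinearMap.rTensor H (Coalgebra.comul (R := C))) (Coalgebra.comul (R := C) g)) := by
  rw [Δ.rep_spec g, map_list_sum, map_list_sum, List.map_map, List.map_map]
  refine msum_congr fun p _ => ?_
  simp only [Function.comp_apply, LinearMap.rTensor_tmul]
  rw [Δ.rep_spec p.1]
  have h : ∀ x : H ⊗[C] H,
      Φ (x ⊗ₜ[C] p.2) = (Φ ∘ₗ (TensorProduct.mk C (H ⊗[C] H) H).flip p.2) x := fun _ => rfl
  rw [h, map_list_sum, List.map_map]
  rfl

theorem rep_sum_lift₂' (Ψ : H ⊗[C] (H ⊗[C] H) →ₗ[C] M) (g : H) :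
    ((Δ.rep g).map fun p =>
        ((Δ.rep p.2).map fun q => Ψ (p.1 ⊗ₜ[C] (q.1 ⊗ₜ[C] q.2))).sum).sum
      = Ψ ((LinearMap.lTensor H (Coalgebra.comul (R := C))) (Coalgebra.comul (R := C) g)) := by
  rw [Δ.rep_spec g, map_list_sum, map_list_sum, List.map_map, List.map_map]
  refine msum_congr fun p _ => ?_
  simp only [Function.comp_apply, LinearMap.lTensor_tmul]
  rw [Δ.rep_spec p.2]
  have h : ∀ x : H ⊗[C] H,
      Ψ (p.1 ⊗ₜ[C] x) = (Ψ ∘ₗ (TensorProduct.mk C H (H ⊗[C] H)) p.1) x := fun _ => rfl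
  rw [h, map_list_sum, List.map_map]
  rfl

/-- The key coassociativity lemma, element-rep level. -/
theorem E1 (g : H) (F : H → H → H → M) (h1 : ∀ y z, IsLinearMap C fun x => F x y z)
    (h2 : ∀ x z, IsLinearMap C fun y => F x y z)
    (h3 : ∀ x y, IsLinearMap C fun z => F x y z) :
    ((Δ.rep g).map fun p => ((Δ.rep p.1).map fun q => F q.1 q.2 p.2).sum).sum
      = ((Δ.rep g).map fun p => ((Δ.rep p.2).map fun q => F p.1 q.1 q.2).sum).sum := by
  have hΦ := rep_sum_lift₂ Δ (tri₃ (C := C) F h1 h2 h3) g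
  have hΨ := rep_sum_lift₂' Δ ((tri₃ (C := C) F h1 h2 h3) ∘ₗ
      (TensorProduct.assoc C H H H).symm.toLinearMap) g
  simp only [tri₃_tmul, LinearMap.coe_comp, Function.comp_apply,
    LinearEquiv.coe_coe, TensorProduct.assoc_symm_tmul] at hΦ hΨ
  rw [hΦ, hΨ, Coalgebra.coassoc_symm_apply]

theorem repε_l (g : H) (f : H → M) (hf : IsLinearMap C f) :
    ((Δ.rep g).map fun p => Coalgebra.counit (R := C) p.1 • f p.2).sum = f g := by
  have := rep_sum_lift Δ ((IsLinearMap.mk' f hf) ∘ₗ (TensorProduct.lid C H).toLinearMap ∘ₗ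
      (LinearMap.rTensor H (Coalgebra.counit (R := C)))) g
  simp only [LinearMap.coe_comp, Function.comp_apply, LinearMap.rTensor_tmul,
    LinearEquiv.coe_coe, TensorProduct.lid_tmul, Coalgebra.rTensor_counit_comul,
    IsLinearMap.mk'_apply, one_smul] at this
  rw [← this]
  exact msum_congr fun p _ => (hf.map_smul _ _).symm

theorem repε_r (g : H) (f : H → M) (hf : IsLinearMap C f) :
    ((Δ.rep g).map fun p => Coalgebra.counit (R := C) p.2 • f p.1).sum = f g := by
  have := rep_sum_lift Δ ((IsLinearMap.mk' f hf) ∘ₗ (TensorProduct.rid C H).toLinearMap ∘ₗ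
      (LinearMap.lTensor H (Coalgebra.counit (R := C)))) g
  simp only [LinearMap.coe_comp, Function.comp_apply, LinearMap.lTensor_tmul,
    LinearEquiv.coe_coe, TensorProduct.rid_tmul, Coalgebra.lTensor_counit_comul,
    IsLinearMap.mk'_apply, one_smul] at this
  rw [← this]
  exact msum_congr fun p _ => (hf.map_smul _ _).symm

theorem repS_l (g : H) :
    ((Δ.rep g).map fun p => (HopfAlgebra.antipode (R := C) p.1 : H) * p.2).sum
      = Coalgebra.counit (R := C) g • (1 : H) := by
  have := rep_sum_lift Δ ((LinearMap.mul' C H) ∘ₗ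
      (LinearMap.rTensor H (HopfAlgebra.antipode (R := C)))) g
  simp only [LinearMap.coe_comp, Function.comp_apply, LinearMap.rTensor_tmul,
    LinearMap.mul'_apply] at this
  rw [this, HopfAlgebra.mul_antipode_rTensor_comul_apply, Algebra.algebraMap_eq_smul_one]

theorem repS_r (g : H) :
    ((Δ.rep g).map fun p => p.1 * (HopfAlgebra.antipode (R := C) p.2 : H)).sum
      = Coalgebra.counit (R := C) g • (1 : H) := by
  have := rep_sum_lift Δ ((LinearMap.mul' C H) ∘ₗ
      (LinearMap.lTensor H (HopfAlgebra.antipode (R := C)))) g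
  simp only [LinearMap.coe_comp, Function.comp_apply, LinearMap.lTensor_tmul,
    LinearMap.mul'_apply] at this
  rw [this, HopfAlgebra.mul_antipode_lTensor_comul_apply, Algebra.algebraMap_eq_smul_one]

theorem list_sum_mul_sum {R : Type*} [NonUnitalNonAssocSemiring R] {α β : Type*}
    (l : List α) (m : List β) (f : α → R) (g : β → R) :
    (l.map f).sum * (m.map g).sum
      = (l.map fun x => (m.map fun y => f x * g y).sum).sum := by
  induction l with
  | nil => simp
  | cons a t ih => simp [add_mul, ih, List.sum_map_mul_left]

theorem rep_mul (g h : H) (f : H → H → M) (h1 : ∀ y, IsLinearMap C fun x => f x y)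
    (h2 : ∀ x, IsLinearMap C fun y => f x y) :
    ((Δ.rep (g * h)).map fun p => f p.1 p.2).sum
      = ((Δ.rep g).map fun p =>
          ((Δ.rep h).map fun q => f (p.1 * q.1) (p.2 * q.2)).sum).sum := by
  have hl := rep_sum_lift Δ (bil₂ (C := C) f h1 h2) (g * h)
  simp only [bil₂_tmul] at hl
  rw [hl, Bialgebra.comul_mul, Δ.rep_spec g, Δ.rep_spec h, list_sum_mul_sum,
    map_list_sum, List.map_map]
  refine msum_congr fun p _ => ?_
  simp only [Function.comp_apply]
  rw [map_list_sum, List.map_map]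
  exact msum_congr fun q _ => by
    simp [Algebra.TensorProduct.tmul_mul_tmul]

theorem rep_one (f : H → H → M) (h1 : ∀ y, IsLinearMap C fun x => f x y)
    (h2 : ∀ x, IsLinearMap C fun y => f x y) :
    ((Δ.rep (1 : H)).map fun p => f p.1 p.2).sum = f 1 1 := by
  have hl := rep_sum_lift Δ (bil₂ (C := C) f h1 h2) 1
  simp only [bil₂_tmul] at hl
  rw [hl, Bialgebra.comul_one, Algebra.TensorProduct.one_def, bil₂_tmul]

end Sums2

section Conv

variable {C H B : Type*} [CommRing C]
  [Ring H] [HopfAlgebra C H]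
  [Ring B] [Algebra C B]
  (Δ : SweedlerRep C H)

theorem lin_mul_right {f : H → B} (hf : IsLinearMap C f) (c : B) :
    IsLinearMap C fun x => f x * c :=
  ⟨fun a b => by rw [hf.map_add, add_mul], fun r a => by rw [hf.map_smul, smul_mul_assoc]⟩

theorem lin_mul_left {f : H → B} (hf : IsLinearMap C f) (c : B) :
    IsLinearMap C fun x => c * f x :=
  ⟨fun a b => by rw [hf.map_add, mul_add], fun r a => by rw [hf.map_smul, mul_smul_comm]⟩

/-- generic convolution on functions `H → B` -/
def cnvB (u v : H → B) : H → B :=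
  fun g => ((Δ.rep g).map fun p => u p.1 * v p.2).sum

theorem cnv_lin {u v : H → B} (hu : IsLinearMap C u) (hv : IsLinearMap C v) :
    IsLinearMap C (cnvB Δ u v) :=
  lin_repsum Δ _ (fun y => lin_mul_right hu (v y)) (fun x => lin_mul_left hv (u x))

theorem cnv_assoc (u v w : H → B) (hu : IsLinearMap C u) (hv : IsLinearMap C v)
    (hw : IsLinearMap C w) (g : H) :
    cnvB Δ (cnvB Δ u v) w g = cnvB Δ u (cnvB Δ v w) g := by
  unfold cnvB
  have step1 : ((Δ.rep g).map fun p =>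
        ((Δ.rep p.1).map fun q => u q.1 * v q.2).sum * w p.2).sum
      = ((Δ.rep g).map fun p =>
        ((Δ.rep p.1).map fun q => u q.1 * v q.2 * w p.2).sum).sum :=
    msum_congr fun p _ => (List.sum_map_mul_right _ _ _).symm
  rw [step1, E1 Δ g (fun x y z => u x * v y * w z)
      (fun y z => lin_mul_right (lin_mul_right hu (v y)) (w z))
      (fun x z => lin_mul_right (lin_mul_left hv (u x)) (w z))
      (fun x y => lin_mul_left hw (u x * v y))]
  refine msum_congr fun p _ => ?_
  rw [← List.sum_map_mul_left]
  exact msum_congr fun q _ => (mul_assoc _ _ _)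

theorem cnv_unit_l {u : H → B} (hu : IsLinearMap C u) (g : H) :
    cnvB Δ (fun x => Coalgebra.counit (R := C) x • (1 : B)) u g = u g := by
  unfold cnvB
  rw [show ((Δ.rep g).map fun p => (Coalgebra.counit (R := C) p.1 • (1 : B)) * u p.2).sum
      = ((Δ.rep g).map fun p => Coalgebra.counit (R := C) p.1 • u p.2).sum from
    msum_congr fun p _ => by rw [smul_mul_assoc, one_mul]]
  exact repε_l Δ g u hu

theorem cnv_unit_r {u : H → B} (hu : IsLinearMap C u) (g : H) :
    cnvB Δ u (fun x => Coalgebra.counit (R := C) x • (1 : B)) g = u g := by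
  unfold cnvB
  rw [show ((Δ.rep g).map fun p => u p.1 * (Coalgebra.counit (R := C) p.2 • (1 : B))).sum
      = ((Δ.rep g).map fun p => Coalgebra.counit (R := C) p.2 • u p.1).sum from
    msum_congr fun p _ => by rw [mul_smul_comm, mul_one]]
  exact repε_r Δ g u hu

end Conv

section MoreSums

variable {C H M : Type*} [CommRing C]
  [Ring H] [HopfAlgebra C H]
  [AddCommGroup M] [Module C M]
  (Δ : SweedlerRep C H)

theorem lin_listsum {ι : Type*} (l : List ι) (f : ι → H → M)
    (hf : ∀ i, IsLinearMap C (f i)) :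
    IsLinearMap C fun x => (l.map fun i => f i x).sum := by
  constructor
  · intro a b
    rw [← sum_map_add']
    exact msum_congr fun i _ => (hf i).map_add a b
  · intro c x
    rw [List.smul_sum, List.map_map]
    exact msum_congr fun i _ => (hf i).map_smul c x

theorem map_sum_linear (f : H → M) (hf : IsLinearMap C f) {ι : Type*} (l : List ι)
    (m : ι → H) : (l.map fun i => f (m i)).sum = f ((l.map m).sum) := by
  have h := map_list_sum (IsLinearMap.mk' f hf) (l.map m)
  rw [List.map_map] at h
  exact h.symm

theorem repS_l_f (g : H) (f : H → M) (hf : IsLinearMap C f) :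
    ((Δ.rep g).map fun p => f ((HopfAlgebra.antipode (R := C) p.1 : H) * p.2)).sum
      = Coalgebra.counit (R := C) g • f 1 := by
  rw [map_sum_linear (C := C) f hf, repS_l Δ g, hf.map_smul]

theorem repS_r_f (g : H) (f : H → M) (hf : IsLinearMap C f) :
    ((Δ.rep g).map fun p => f (p.1 * (HopfAlgebra.antipode (R := C) p.2 : H))).sum
      = Coalgebra.counit (R := C) g • f 1 := by
  rw [map_sum_linear (C := C) f hf, repS_r Δ g, hf.map_smul]

end MoreSums

section Conv2

variable {C H B : Type*} [CommRing C]
  [Ring H] [HopfAlgebra C H]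
  [Ring B] [Algebra C B]
  (Δ : SweedlerRep C H)

/-- convolution on two-variable maps (i.e. on `Hom(H ⊗ H, B)`) -/
def cnv2 (F G : H → H → B) : H → H → B := fun x y =>
  ((Δ.rep x).map fun p => ((Δ.rep y).map fun q => F p.1 q.1 * G p.2 q.2).sum).sum

theorem cnv2_assoc (F G K : H → H → B)
    (hF1 : ∀ y, IsLinearMap C fun x => F x y) (hF2 : ∀ x, IsLinearMap C (F x))
    (hG1 : ∀ y, IsLinearMap C fun x => G x y) (hG2 : ∀ x, IsLinearMap C (G x))
    (hK1 : ∀ y, IsLinearMap C fun x => K x y) (hK2 : ∀ x, IsLinearMap C (K x))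
    (x y : H) :
    cnv2 Δ (cnv2 Δ F G) K x y = cnv2 Δ F (cnv2 Δ G K) x y := by
  unfold cnv2
  have step1 : ∀ p : H × H,
      ((Δ.rep y).map fun q => (((Δ.rep p.1).map fun p' =>
          ((Δ.rep q.1).map fun q' => F p'.1 q'.1 * G p'.2 q'.2).sum).sum) * K p.2 q.2).sum
      = ((Δ.rep p.1).map fun p' => ((Δ.rep y).map fun q =>
          ((Δ.rep q.1).map fun q' => (F p'.1 q'.1 * G p'.2 q'.2) * K p.2 q.2).sum).sum).sum := by
    intro p
    rw [← sum_comm']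
    refine msum_congr fun q _ => ?_
    rw [← List.sum_map_mul_right]
    exact msum_congr fun p' _ => (List.sum_map_mul_right _ _ _).symm
  simp only [step1]
  rw [E1 Δ x (fun a b c => ((Δ.rep y).map fun q =>
        ((Δ.rep q.1).map fun q' => (F a q'.1 * G b q'.2) * K c q.2).sum).sum)
      (fun b c => lin_listsum (Δ.rep y)
        (fun q z => ((Δ.rep q.1).map fun q' => (F z q'.1 * G b q'.2) * K c q.2).sum)
        (fun q => lin_listsum (Δ.rep q.1)
          (fun q' z => (F z q'.1 * G b q'.2) * K c q.2)
          (fun q' => lin_mul_right (lin_mul_right (hF1 q'.1) _) _)))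
      (fun a c => lin_listsum (Δ.rep y)
        (fun q z => ((Δ.rep q.1).map fun q' => (F a q'.1 * G z q'.2) * K c q.2).sum)
        (fun q => lin_listsum (Δ.rep q.1)
          (fun q' z => (F a q'.1 * G z q'.2) * K c q.2)
          (fun q' => lin_mul_right (lin_mul_left (hG1 q'.2) _) _)))
      (fun a b => lin_listsum (Δ.rep y)
        (fun q z => ((Δ.rep q.1).map fun q' => (F a q'.1 * G b q'.2) * K z q.2).sum)
        (fun q => lin_listsum (Δ.rep q.1)
          (fun q' z => (F a q'.1 * G b q'.2) * K z q.2)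
          (fun q' => lin_mul_left (hK1 q.2) _)))]
  refine msum_congr fun p _ => ?_
  have step2 : ∀ p' : H × H,
      ((Δ.rep y).map fun q =>
        ((Δ.rep q.1).map fun q' => (F p.1 q'.1 * G p'.1 q'.2) * K p'.2 q.2).sum).sum
      = ((Δ.rep y).map fun q =>
        ((Δ.rep q.2).map fun q' => (F p.1 q.1 * G p'.1 q'.1) * K p'.2 q'.2).sum).sum := by
    intro p'
    exact E1 Δ y (fun a b c => (F p.1 a * G p'.1 b) * K p'.2 c)
      (fun b c => lin_mul_right (lin_mul_right ⟨(hF2 p.1).map_add, (hF2 p.1).map_smul⟩ _) _)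
      (fun a c => lin_mul_right (lin_mul_left (hG2 p'.1) _) _)
      (fun a b => lin_mul_left (hK2 p'.2) _)
  simp only [step2]
  rw [sum_comm']
  refine msum_congr fun q _ => ?_
  rw [← List.sum_map_mul_left]
  refine msum_congr fun p' _ => ?_
  rw [← List.sum_map_mul_left]
  exact msum_congr fun q' _ => (mul_assoc _ _ _)

theorem cnv2_unit_l (F : H → H → B)
    (hF1 : ∀ y, IsLinearMap C fun x => F x y) (hF2 : ∀ x, IsLinearMap C (F x)) (x y : H) :
    cnv2 Δ (fun a b => (Coalgebra.counit (R := C) a * Coalgebra.counit (R := C) b) • (1 : B))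
      F x y = F x y := by
  unfold cnv2
  have : ∀ p : H × H,
      ((Δ.rep y).map fun q =>
        ((Coalgebra.counit (R := C) p.1 * Coalgebra.counit (R := C) q.1) • (1 : B))
          * F p.2 q.2).sum
      = Coalgebra.counit (R := C) p.1 • F p.2 y := by
    intro p
    rw [show ((Δ.rep y).map fun q =>
        ((Coalgebra.counit (R := C) p.1 * Coalgebra.counit (R := C) q.1) • (1 : B))
          * F p.2 q.2).sum
      = ((Δ.rep y).map fun q =>
        Coalgebra.counit (R := C) q.1 • (Coalgebra.counit (R := C) p.1 • F p.2 q.2)).sum from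
      msum_congr fun q _ => by
        rw [smul_mul_assoc, one_mul, mul_comm (Coalgebra.counit (R := C) p.1), ← smul_smul]]
    rw [repε_l Δ y (fun w => Coalgebra.counit (R := C) p.1 • F p.2 w)
      ⟨fun a b => by rw [(hF2 p.2).map_add, smul_add],
       fun c a => by rw [(hF2 p.2).map_smul, smul_comm]⟩]
  simp only [this]
  exact repε_l Δ x (fun w => F w y) (hF1 y)

theorem cnv2_unit_r (F : H → H → B)
    (hF1 : ∀ y, IsLinearMap C fun x => F x y) (hF2 : ∀ x, IsLinearMap C (F x)) (x y : H) :
    cnv2 Δ F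
      (fun a b => (Coalgebra.counit (R := C) a * Coalgebra.counit (R := C) b) • (1 : B))
      x y = F x y := by
  unfold cnv2
  have : ∀ p : H × H,
      ((Δ.rep y).map fun q => F p.1 q.1 *
        ((Coalgebra.counit (R := C) p.2 * Coalgebra.counit (R := C) q.2) • (1 : B))).sum
      = Coalgebra.counit (R := C) p.2 • F p.1 y := by
    intro p
    rw [show ((Δ.rep y).map fun q => F p.1 q.1 *
        ((Coalgebra.counit (R := C) p.2 * Coalgebra.counit (R := C) q.2) • (1 : B))).sum
      = ((Δ.rep y).map fun q =>
        Coalgebra.counit (R := C) q.2 • (Coalgebra.counit (R := C) p.2 • F p.1 q.1)).sum from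
      msum_congr fun q _ => by
        rw [mul_smul_comm, mul_one, mul_comm (Coalgebra.counit (R := C) p.2), ← smul_smul]]
    rw [repε_r Δ y (fun w => Coalgebra.counit (R := C) p.2 • F p.1 w)
      ⟨fun a b => by rw [(hF2 p.1).map_add, smul_add],
       fun c a => by rw [(hF2 p.1).map_smul, smul_comm]⟩]
  simp only [this]
  exact repε_r Δ x (fun w => F w y) (hF1 y)

theorem cnv2_congr_l (F F' G : H → H → B) (h : ∀ a b, F a b = F' a b) (x y : H) :
    cnv2 Δ F G x y = cnv2 Δ F' G x y := by
  unfold cnv2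
  exact msum_congr fun p _ => msum_congr fun q _ => by rw [h]

theorem cnv2_congr_r (F G G' : H → H → B) (h : ∀ a b, G a b = G' a b) (x y : H) :
    cnv2 Δ F G x y = cnv2 Δ F G' x y := by
  unfold cnv2
  exact msum_congr fun p _ => msum_congr fun q _ => by rw [h]

end Conv2

section Antipode

variable {C H : Type*} [CommRing C] [Ring H] [HopfAlgebra C H]

/-- The antipode is anti-multiplicative. -/
theorem antipode_antimul (Δ : SweedlerRep C H) (x y : H) :
    (HopfAlgebra.antipode (R := C) (x * y) : H)
      = HopfAlgebra.antipode (R := C) y * HopfAlgebra.antipode (R := C) x := by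
  set S : H →ₗ[C] H := HopfAlgebra.antipode (R := C) with hS
  have linS : IsLinearMap C fun w : H => (S w : H) := ⟨map_add S, map_smul S⟩
  have repS_l' : ∀ g : H, ((Δ.rep g).map fun p => (S p.1 : H) * p.2).sum
      = Coalgebra.counit (R := C) g • (1 : H) := fun g => by
    rw [hS]; exact repS_l Δ g
  have repS_r' : ∀ g : H, ((Δ.rep g).map fun p => p.1 * (S p.2 : H)).sum
      = Coalgebra.counit (R := C) g • (1 : H) := fun g => by
    rw [hS]; exact repS_r Δ g
  have hm1 : ∀ b : H, IsLinearMap C fun a : H => a * b :=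
    fun b => lin_mul_right ⟨fun _ _ => rfl, fun _ _ => rfl⟩ b
  have hm2 : ∀ a : H, IsLinearMap C fun b : H => a * b :=
    fun a => lin_mul_left ⟨fun _ _ => rfl, fun _ _ => rfl⟩ a
  have hσ1 : ∀ b : H, IsLinearMap C fun a : H => (S (a * b) : H) :=
    fun b => ⟨fun u v => by rw [add_mul, map_add],
      fun c u => by rw [smul_mul_assoc, map_smul]⟩
  have hσ2 : ∀ a : H, IsLinearMap C fun b : H => (S (a * b) : H) :=
    fun a => ⟨fun u v => by rw [mul_add, map_add],
      fun c u => by rw [mul_smul_comm, map_smul]⟩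
  have hρ1 : ∀ b : H, IsLinearMap C fun a : H => (S b : H) * S a :=
    fun b => ⟨fun u v => by rw [map_add, mul_add],
      fun c u => by rw [map_smul, mul_smul_comm]⟩
  have hρ2 : ∀ a : H, IsLinearMap C fun b : H => (S b : H) * S a :=
    fun a => ⟨fun u v => by rw [map_add, add_mul],
      fun c u => by rw [map_smul, smul_mul_assoc]⟩
  have hE1 : ∀ b : H, IsLinearMap C fun a : H =>
      (Coalgebra.counit (R := C) a * Coalgebra.counit (R := C) b) • (1 : H) :=
    fun b => ⟨fun u v => by rw [map_add, add_mul, add_smul],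
      fun c u => by rw [map_smul, smul_eq_mul, mul_assoc, ← smul_smul]⟩
  have hE2 : ∀ a : H, IsLinearMap C fun b : H =>
      (Coalgebra.counit (R := C) a * Coalgebra.counit (R := C) b) • (1 : H) :=
    fun a => ⟨fun u v => by rw [map_add, mul_add, add_smul],
      fun c u => by rw [map_smul, smul_eq_mul, mul_left_comm, ← smul_smul]⟩
  -- m ⋆ σ = E
  have h1 : ∀ u v : H, cnv2 Δ (fun a b => a * b) (fun a b => (S (a * b) : H)) u v
      = (Coalgebra.counit (R := C) u * Coalgebra.counit (R := C) v) • (1 : H) := by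
    intro u v
    unfold cnv2
    have := rep_mul Δ u v (fun a b => a * (S b : H))
      (fun b => lin_mul_right ⟨fun _ _ => rfl, fun _ _ => rfl⟩ _)
      (fun a => ⟨fun s t => by show a * S (s + t) = a * S s + a * S t
                               rw [map_add, mul_add],
                 fun c s => by show a * S (c • s) = c • (a * S s)
                               rw [map_smul, mul_smul_comm]⟩)
    rw [← this, repS_r' (u * v), Bialgebra.counit_mul]
  -- ρ ⋆ m = E
  have h2 : ∀ u v : H, cnv2 Δ (fun a b => (S b : H) * S a) (fun a b => a * b) u v
      = (Coalgebra.counit (R := C) u * Coalgebra.counit (R := C) v) • (1 : H) := by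
    intro u v
    unfold cnv2
    rw [sum_comm']
    have inner : ∀ q : H × H,
        ((Δ.rep u).map fun p => ((S q.1 : H) * S p.1) * (p.2 * q.2)).sum
          = Coalgebra.counit (R := C) u • ((S q.1 : H) * q.2) := by
      intro q
      rw [show ((Δ.rep u).map fun p => ((S q.1 : H) * S p.1) * (p.2 * q.2)).sum
          = ((Δ.rep u).map fun p => (S q.1 : H) * (((S p.1 : H) * p.2) * q.2)).sum from
        msum_congr fun p _ => by rw [mul_assoc, ← mul_assoc (S p.1 : H)]]
      rw [List.sum_map_mul_left, List.sum_map_mul_right, repS_l' u,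
        smul_mul_assoc, one_mul, mul_smul_comm]
    simp only [inner]
    rw [sum_map_smul, repS_l' v, smul_smul]
  -- uniqueness
  have chain : ∀ u v : H, (S (u * v) : H) = (S v : H) * S u := by
    intro u v
    have c1 : (S (u * v) : H)
        = cnv2 Δ (fun a b => (Coalgebra.counit (R := C) a * Coalgebra.counit (R := C) b)
            • (1 : H)) (fun a b => (S (a * b) : H)) u v :=
      (cnv2_unit_l Δ _ hσ1 hσ2 u v).symm
    have c2 : cnv2 Δ (fun a b => (Coalgebra.counit (R := C) a * Coalgebra.counit (R := C) b)
          • (1 : H)) (fun a b => (S (a * b) : H)) u v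
        = cnv2 Δ (cnv2 Δ (fun a b => (S b : H) * S a) (fun a b => a * b))
            (fun a b => (S (a * b) : H)) u v :=
      cnv2_congr_l Δ _ _ _ (fun a b => (h2 a b).symm) u v
    have c3 := cnv2_assoc Δ (fun a b => (S b : H) * S a) (fun a b => a * b)
      (fun a b => (S (a * b) : H)) hρ1 hρ2 hm1 hm2 hσ1 hσ2 u v
    have c4 : cnv2 Δ (fun a b => (S b : H) * S a)
          (cnv2 Δ (fun a b => a * b) (fun a b => (S (a * b) : H))) u v
        = cnv2 Δ (fun a b => (S b : H) * S a)
            (fun a b => (Coalgebra.counit (R := C) a * Coalgebra.counit (R := C) b)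
              • (1 : H)) u v :=
      cnv2_congr_r Δ _ _ _ (fun a b => h1 a b) u v
    have c5 := cnv2_unit_r Δ (fun a b => (S b : H) * S a) hρ1 hρ2 u v
    rw [c1, c2, c3, c4, c5]
  exact chain x y

end Antipode

section ConvCongr

variable {C H B : Type*} [CommRing C] [Ring H] [HopfAlgebra C H] [Ring B] [Algebra C B]
  (Δ : SweedlerRep C H)

theorem cnv_congr_l (u u' v : H → B) (h : ∀ a, u a = u' a) (g : H) :
    cnvB Δ u v g = cnvB Δ u' v g := by
  unfold cnvB
  exact msum_congr fun p _ => by rw [h]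

theorem cnv_congr_r (u v v' : H → B) (h : ∀ a, v a = v' a) (g : H) :
    cnvB Δ u v g = cnvB Δ u v' g := by
  unfold cnvB
  exact msum_congr fun p _ => by rw [h]

end ConvCongr

section AntipodeMore

variable {C H : Type*} [CommRing C] [Ring H] [HopfAlgebra C H]

theorem antipode_one' (Δ : SweedlerRep C H) :
    (HopfAlgebra.antipode (R := C) (1 : H) : H) = 1 := by
  have h := repS_r Δ (1 : H)
  rw [rep_one Δ (fun a b => a * (HopfAlgebra.antipode (R := C) b : H))
      (fun b => lin_mul_right ⟨fun _ _ => rfl, fun _ _ => rfl⟩ _)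
      (fun a => ⟨fun s t => by simp only [map_add, mul_add],
                 fun c s => by simp only [map_smul, mul_smul_comm]⟩)] at h
  rw [Bialgebra.counit_one, one_smul, one_mul] at h
  exact h

theorem counit_antipode' (Δ : SweedlerRep C H) (g : H) :
    Coalgebra.counit (R := C) (HopfAlgebra.antipode (R := C) g : H)
      = Coalgebra.counit (R := C) g := by
  have lε : IsLinearMap C (Coalgebra.counit (R := C) (A := H)) :=
    ⟨map_add _, map_smul _⟩
  have h1 : ((Δ.rep g).map fun p =>
      Coalgebra.counit (R := C) ((HopfAlgebra.antipode (R := C) p.1 : H) * p.2)).sum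
      = Coalgebra.counit (R := C) g := by
    rw [map_sum_linear (C := C) _ lε, repS_l Δ g, lε.map_smul, Bialgebra.counit_one,
      smul_eq_mul, mul_one]
  have h2 : ((Δ.rep g).map fun p =>
      Coalgebra.counit (R := C) ((HopfAlgebra.antipode (R := C) p.1 : H) * p.2)).sum
      = Coalgebra.counit (R := C) (HopfAlgebra.antipode (R := C) g : H) := by
    rw [show ((Δ.rep g).map fun p =>
        Coalgebra.counit (R := C) ((HopfAlgebra.antipode (R := C) p.1 : H) * p.2)).sum
      = ((Δ.rep g).map fun p => Coalgebra.counit (R := C) p.2 •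
        Coalgebra.counit (R := C) (HopfAlgebra.antipode (R := C) p.1 : H)).sum from
      msum_congr fun p _ => by
        rw [Bialgebra.counit_mul, smul_eq_mul, mul_comm]]
    exact repε_r Δ g (fun w => Coalgebra.counit (R := C)
      (HopfAlgebra.antipode (R := C) w : H))
      ⟨fun a b => by simp only [map_add, map_add], fun c a => by simp only [map_smul, map_smul]⟩
  rw [← h2, h1]

/-- The antipode is anti-comultiplicative, in rep form. -/
theorem comul_antipode_rep (Δ : SweedlerRep C H) (g : H) :
    Coalgebra.comul (R := C) (HopfAlgebra.antipode (R := C) g : H)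
      = ((Δ.rep g).map fun p => (HopfAlgebra.antipode (R := C) p.2 : H)
          ⊗ₜ[C] (HopfAlgebra.antipode (R := C) p.1 : H)).sum := by
  have lin_u : IsLinearMap C fun w : H => Coalgebra.comul (R := C) w :=
    ⟨map_add _, map_smul _⟩
  have lin_v : IsLinearMap C fun w : H =>
      Coalgebra.comul (R := C) (HopfAlgebra.antipode (R := C) w : H) :=
    ⟨fun a b => by simp only [map_add, map_add], fun c a => by simp only [map_smul, map_smul]⟩
  have lin_w : IsLinearMap C fun z : H => ((Δ.rep z).map fun p =>
      (HopfAlgebra.antipode (R := C) p.2 : H)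
        ⊗ₜ[C] (HopfAlgebra.antipode (R := C) p.1 : H)).sum :=
    lin_repsum Δ (fun a b => (HopfAlgebra.antipode (R := C) b : H)
        ⊗ₜ[C] (HopfAlgebra.antipode (R := C) a : H))
      (fun b => ⟨fun s t => by simp only [map_add, TensorProduct.tmul_add],
                 fun c s => by simp only [map_smul, TensorProduct.tmul_smul]⟩)
      (fun a => ⟨fun s t => by simp only [map_add, TensorProduct.add_tmul],
                 fun c s => by simp only [map_smul, TensorProduct.smul_tmul']⟩)
  have lin_e : IsLinearMap C fun z : H =>
      Coalgebra.counit (R := C) z • (1 : H ⊗[C] H) :=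
    ⟨fun a b => by simp only [map_add, add_smul], fun c a => by simp only [map_smul, smul_eq_mul, mul_smul]⟩
  -- u ⋆ v = e
  have huv : ∀ z : H, cnvB Δ (fun w => Coalgebra.comul (R := C) w)
      (fun w => Coalgebra.comul (R := C) (HopfAlgebra.antipode (R := C) w : H)) z
      = Coalgebra.counit (R := C) z • (1 : H ⊗[C] H) := by
    intro z
    unfold cnvB
    rw [show ((Δ.rep z).map fun p => Coalgebra.comul (R := C) p.1 *
        Coalgebra.comul (R := C) (HopfAlgebra.antipode (R := C) p.2 : H)).sum
      = ((Δ.rep z).map fun p => Coalgebra.comul (R := C)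
          (p.1 * (HopfAlgebra.antipode (R := C) p.2 : H))).sum from
      msum_congr fun p _ => (Bialgebra.comul_mul _ _).symm]
    rw [map_sum_linear (C := C) _ lin_u, repS_r Δ z, lin_u.map_smul, Bialgebra.comul_one]
  -- w ⋆ u = e
  have hwu : ∀ z : H, cnvB Δ (fun z' => ((Δ.rep z').map fun p =>
        (HopfAlgebra.antipode (R := C) p.2 : H)
          ⊗ₜ[C] (HopfAlgebra.antipode (R := C) p.1 : H)).sum)
      (fun w => Coalgebra.comul (R := C) w) z
      = Coalgebra.counit (R := C) z • (1 : H ⊗[C] H) := by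
    intro z
    unfold cnvB
    have step1 : ∀ p : H × H, (((Δ.rep p.1).map fun q =>
          (HopfAlgebra.antipode (R := C) q.2 : H)
            ⊗ₜ[C] (HopfAlgebra.antipode (R := C) q.1 : H)).sum)
          * Coalgebra.comul (R := C) p.2
        = ((Δ.rep p.1).map fun q => ((Δ.rep p.2).map fun r =>
            ((HopfAlgebra.antipode (R := C) q.2 : H) * r.1)
              ⊗ₜ[C] ((HopfAlgebra.antipode (R := C) q.1 : H) * r.2)).sum).sum := by
      intro p
      rw [Δ.rep_spec p.2, list_sum_mul_sum]
      exact msum_congr fun q _ => msum_congr fun r _ =>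
        Algebra.TensorProduct.tmul_mul_tmul _ _ _ _
    simp only [step1]
    rw [E1 Δ z (fun a b c => ((Δ.rep c).map fun r =>
          ((HopfAlgebra.antipode (R := C) b : H) * r.1)
            ⊗ₜ[C] ((HopfAlgebra.antipode (R := C) a : H) * r.2)).sum)
        (fun b c => lin_listsum (Δ.rep c)
          (fun r a => ((HopfAlgebra.antipode (R := C) b : H) * r.1)
            ⊗ₜ[C] ((HopfAlgebra.antipode (R := C) a : H) * r.2))
          (fun r => ⟨fun s t => by simp only [map_add, add_mul, TensorProduct.tmul_add],
            fun c' s => by simp only [map_smul, smul_mul_assoc, TensorProduct.tmul_smul]⟩))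
        (fun a c => lin_listsum (Δ.rep c)
          (fun r b => ((HopfAlgebra.antipode (R := C) b : H) * r.1)
            ⊗ₜ[C] ((HopfAlgebra.antipode (R := C) a : H) * r.2))
          (fun r => ⟨fun s t => by simp only [map_add, add_mul, TensorProduct.add_tmul],
            fun c' s => by simp only [map_smul, smul_mul_assoc, TensorProduct.smul_tmul']⟩))
        (fun a b => lin_repsum Δ (fun r1 r2 =>
            ((HopfAlgebra.antipode (R := C) b : H) * r1)
              ⊗ₜ[C] ((HopfAlgebra.antipode (R := C) a : H) * r2))
          (fun s => ⟨fun m n => by simp only [mul_add, TensorProduct.add_tmul],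
            fun c' m => by simp only [mul_smul_comm, TensorProduct.smul_tmul']⟩)
          (fun s => ⟨fun m n => by simp only [mul_add, TensorProduct.tmul_add],
            fun c' m => by simp only [mul_smul_comm, TensorProduct.tmul_smul]⟩))]
    have step3 : ∀ p : H × H, ((Δ.rep p.2).map fun q => ((Δ.rep q.2).map fun r =>
          ((HopfAlgebra.antipode (R := C) q.1 : H) * r.1)
            ⊗ₜ[C] ((HopfAlgebra.antipode (R := C) p.1 : H) * r.2)).sum).sum
        = ((Δ.rep p.2).map fun q => ((Δ.rep q.1).map fun r =>
          ((HopfAlgebra.antipode (R := C) r.1 : H) * r.2)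
            ⊗ₜ[C] ((HopfAlgebra.antipode (R := C) p.1 : H) * q.2)).sum).sum := by
      intro p
      exact (E1 Δ p.2 (fun a b c =>
          ((HopfAlgebra.antipode (R := C) a : H) * b)
            ⊗ₜ[C] ((HopfAlgebra.antipode (R := C) p.1 : H) * c))
        (fun b c => ⟨fun s t => by simp only [map_add, add_mul, TensorProduct.add_tmul],
          fun c' s => by simp only [map_smul, smul_mul_assoc, TensorProduct.smul_tmul']⟩)
        (fun a c => ⟨fun s t => by simp only [mul_add, TensorProduct.add_tmul],
          fun c' s => by simp only [mul_smul_comm, TensorProduct.smul_tmul']⟩)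
        (fun a b => ⟨fun s t => by simp only [mul_add, TensorProduct.tmul_add],
          fun c' s => by simp only [mul_smul_comm, TensorProduct.tmul_smul]⟩)).symm
    simp only [step3]
    have step4 : ∀ p q : H × H, ((Δ.rep q.1).map fun r =>
          ((HopfAlgebra.antipode (R := C) r.1 : H) * r.2)
            ⊗ₜ[C] ((HopfAlgebra.antipode (R := C) p.1 : H) * q.2)).sum
        = Coalgebra.counit (R := C) q.1 •
            ((1 : H) ⊗ₜ[C] ((HopfAlgebra.antipode (R := C) p.1 : H) * q.2)) := by
      intro p q
      exact repS_l_f Δ q.1 (fun h => h ⊗ₜ[C]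
          ((HopfAlgebra.antipode (R := C) p.1 : H) * q.2))
        ⟨fun s t => TensorProduct.add_tmul _ _ _,
         fun c' s => TensorProduct.smul_tmul' _ _ _⟩
    simp only [step4]
    have step5 : ∀ p : H × H, ((Δ.rep p.2).map fun q =>
          Coalgebra.counit (R := C) q.1 •
            ((1 : H) ⊗ₜ[C] ((HopfAlgebra.antipode (R := C) p.1 : H) * q.2))).sum
        = (1 : H) ⊗ₜ[C] ((HopfAlgebra.antipode (R := C) p.1 : H) * p.2) := by
      intro p
      exact repε_l Δ p.2 (fun w => (1 : H) ⊗ₜ[C]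
          ((HopfAlgebra.antipode (R := C) p.1 : H) * w))
        ⟨fun s t => by simp only [mul_add, TensorProduct.tmul_add],
         fun c' s => by simp only [mul_smul_comm, TensorProduct.tmul_smul]⟩
    simp only [step5]
    rw [repS_l_f Δ z (fun h => (1 : H) ⊗ₜ[C] h)
      ⟨fun s t => TensorProduct.tmul_add _ _ _, fun c' s => TensorProduct.tmul_smul _ _ _⟩,
      Algebra.TensorProduct.one_def]
  -- uniqueness
  have c1 := cnv_unit_l Δ (B := H ⊗[C] H) lin_v g
  have c2 := cnv_congr_l Δ (B := H ⊗[C] H) _ _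
    (fun w => Coalgebra.comul (R := C) (HopfAlgebra.antipode (R := C) w : H))
    (fun a => (hwu a).symm) g
  have c3 := cnv_assoc Δ (B := H ⊗[C] H) _ _ _ lin_w lin_u lin_v g
  have c4 := cnv_congr_r Δ (B := H ⊗[C] H)
    (fun z' => ((Δ.rep z').map fun p => (HopfAlgebra.antipode (R := C) p.2 : H)
      ⊗ₜ[C] (HopfAlgebra.antipode (R := C) p.1 : H)).sum) _ _ (fun a => huv a) g
  have c5 := cnv_unit_r Δ (B := H ⊗[C] H) lin_w g
  rw [← c1, c2, c3, c4, c5]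

end AntipodeMore

section SinvStar

variable {C H : Type*} [CommRing C] [StarRing C] [Ring H] [HopfAlgebra C H]
  [StarRing H] [StarModule C H]
  (Δ : SweedlerRep C H)
  (Sinv : H → H)
  (hSinv₁ : ∀ g : H, Sinv (HopfAlgebra.antipode (R := C) g) = g)
  (hSinv₂ : ∀ g : H, HopfAlgebra.antipode (R := C) (Sinv g) = g)

include Δ Sinv hSinv₁ hSinv₂ in
theorem sinv_lin : IsLinearMap C Sinv := by
  constructor
  · intro a b
    have h : Sinv ((HopfAlgebra.antipode (R := C) (Sinv a + Sinv b) : H)) = Sinv a + Sinv b :=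
      hSinv₁ _
    rw [map_add, hSinv₂, hSinv₂] at h
    exact h
  · intro c a
    have h : Sinv ((HopfAlgebra.antipode (R := C) (c • Sinv a) : H)) = c • Sinv a :=
      hSinv₁ _
    rw [map_smul, hSinv₂] at h
    exact h

include Δ Sinv hSinv₁ hSinv₂ in
theorem antipode_one'' : (HopfAlgebra.antipode (R := C) (1 : H) : H) = 1 :=
  antipode_one' Δ

include Δ Sinv hSinv₁ hSinv₂ in
theorem sinv_one : Sinv (1 : H) = 1 := by
  have := hSinv₁ (1 : H)
  rwa [antipode_one' Δ] at this

include Δ Sinv hSinv₁ hSinv₂ in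
theorem sinv_antimul (x y : H) : Sinv (x * y) = Sinv y * Sinv x := by
  have h : (HopfAlgebra.antipode (R := C) (Sinv y * Sinv x) : H) = x * y := by
    rw [antipode_antimul Δ, hSinv₂, hSinv₂]
  have h2 := hSinv₁ ((Sinv y * Sinv x : H))
  rw [h] at h2
  exact h2

include Δ Sinv hSinv₁ hSinv₂ in
theorem counit_sinv (g : H) :
    Coalgebra.counit (R := C) (Sinv g) = Coalgebra.counit (R := C) g := by
  have := counit_antipode' Δ (Sinv g)
  rw [hSinv₂] at this
  exact this.symm

include Δ Sinv hSinv₁ hSinv₂ in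
theorem comul_sinv_rep (g : H) :
    Coalgebra.comul (R := C) (Sinv g)
      = ((Δ.rep g).map fun p => Sinv p.2 ⊗ₜ[C] Sinv p.1).sum := by
  have lS := sinv_lin (C := C) Δ Sinv hSinv₁ hSinv₂
  set Ψ : H ⊗[C] H →ₗ[C] H ⊗[C] H :=
    (TensorProduct.map (IsLinearMap.mk' Sinv lS) (IsLinearMap.mk' Sinv lS)) ∘ₗ
      (TensorProduct.comm C H H).toLinearMap with hΨ
  have hΨt : ∀ x y : H, Ψ (x ⊗ₜ[C] y) = Sinv y ⊗ₜ[C] Sinv x := fun x y => rfl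
  have key : Coalgebra.comul (R := C) g
      = ((Δ.rep (Sinv g)).map fun p => (HopfAlgebra.antipode (R := C) p.2 : H)
          ⊗ₜ[C] (HopfAlgebra.antipode (R := C) p.1 : H)).sum := by
    rw [← comul_antipode_rep Δ (Sinv g), hSinv₂]
  have := congrArg Ψ key
  rw [Δ.rep_spec g] at this
  rw [map_list_sum, map_list_sum, List.map_map, List.map_map] at this
  have lhs_eq : ((Δ.rep g).map (⇑Ψ ∘ fun p => p.1 ⊗ₜ[C] p.2)).sum
      = ((Δ.rep g).map fun p => Sinv p.2 ⊗ₜ[C] Sinv p.1).sum :=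
    msum_congr fun p _ => rfl
  have rhs_eq : ((Δ.rep (Sinv g)).map (⇑Ψ ∘ fun p =>
        (HopfAlgebra.antipode (R := C) p.2 : H)
          ⊗ₜ[C] (HopfAlgebra.antipode (R := C) p.1 : H))).sum
      = ((Δ.rep (Sinv g)).map fun p => p.1 ⊗ₜ[C] p.2).sum :=
    msum_congr fun p _ => by
      show Ψ _ = _
      rw [hΨt, hSinv₁, hSinv₁]
  rw [lhs_eq, rhs_eq, ← Δ.rep_spec (Sinv g)] at this
  exact this.symm

include Δ Sinv hSinv₁ hSinv₂ in
theorem repSinv_r (g : H) :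
    ((Δ.rep g).map fun p => p.2 * Sinv p.1).sum
      = Coalgebra.counit (R := C) g • (1 : H) := by
  have lS := sinv_lin (C := C) Δ Sinv hSinv₁ hSinv₂
  have h := congrArg Sinv (repS_r Δ g)
  rw [← map_sum_linear (C := C) Sinv lS] at h
  rw [show ((Δ.rep g).map fun p => Sinv (p.1 * (HopfAlgebra.antipode (R := C) p.2 : H))).sum
      = ((Δ.rep g).map fun p => p.2 * Sinv p.1).sum from
    msum_congr fun p _ => by
      rw [sinv_antimul (C := C) Δ Sinv hSinv₁ hSinv₂, hSinv₁]] at h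
  rw [h, lS.map_smul, sinv_one (C := C) Δ Sinv hSinv₁ hSinv₂]

include Δ Sinv hSinv₁ hSinv₂ in
theorem repSinv_r_f {M : Type*} [AddCommGroup M] [Module C M] (g : H) (f : H → M)
    (hf : IsLinearMap C f) :
    ((Δ.rep g).map fun p => f (p.2 * Sinv p.1)).sum
      = Coalgebra.counit (R := C) g • f 1 := by
  rw [map_sum_linear (C := C) f hf, repSinv_r (C := C) Δ Sinv hSinv₁ hSinv₂ g, hf.map_smul]

/-- `star ∘ star` respecting additive map on the tensor square -/
def starMap : H ⊗[C] H →+ H ⊗[C] H :=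
  TensorProduct.liftAddHom
    (AddMonoidHom.mk' (fun x => AddMonoidHom.mk'
        (fun y => (star x : H) ⊗ₜ[C] (star y : H))
        (fun a b => by simp only [star_add, TensorProduct.tmul_add]))
      (fun a b => AddMonoidHom.ext fun y => by
        show (star (a + b) : H) ⊗ₜ[C] _ = _
        rw [star_add, TensorProduct.add_tmul]; rfl))
    (fun r m n => by
      show (star (r • m) : H) ⊗ₜ[C] (star n : H) = (star m : H) ⊗ₜ[C] (star (r • n) : H)
      rw [star_smul, star_smul, TensorProduct.smul_tmul])

@[simp] theorem starMap_tmul (x y : H) :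
    starMap (C := C) (x ⊗ₜ[C] y) = (star x : H) ⊗ₜ[C] (star y : H) := rfl

theorem comul_theta_rep
    (hcomul_star : ∀ g : H, Coalgebra.comul (R := C) (star g)
      = ((Δ.rep g).map fun p => star p.1 ⊗ₜ[C] star p.2).sum) (k : H) :
    Coalgebra.comul (R := C) (star (HopfAlgebra.antipode (R := C) k : H))
      = ((Δ.rep k).map fun p =>
          (star (HopfAlgebra.antipode (R := C) p.2 : H))
            ⊗ₜ[C] (star (HopfAlgebra.antipode (R := C) p.1 : H))).sum := by
  rw [hcomul_star (HopfAlgebra.antipode (R := C) k : H)]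
  have h1 : ((Δ.rep ((HopfAlgebra.antipode (R := C) k : H))).map
        fun p => (star p.1 : H) ⊗ₜ[C] (star p.2 : H)).sum
      = starMap (C := C) (((Δ.rep ((HopfAlgebra.antipode (R := C) k : H))).map
        fun p => p.1 ⊗ₜ[C] p.2).sum) := by
    rw [map_list_sum, List.map_map]
    exact msum_congr fun p _ => rfl
  rw [h1, ← Δ.rep_spec, comul_antipode_rep Δ k, map_list_sum, List.map_map]
  exact msum_congr fun p _ => rfl

end SinvStar

end
end SweedlerAux

open SweedlerAux


/-- Membership in `U(H, A)`: an element of `GL(H, A)` satisfying the unitarity condition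
`a(g₍₁₎)(a(S(g₍₂₎)*))* = ε(g)·1`. -/
def memU {C H A : Type*} [CommRing C] [StarRing C]
    [Ring H] [HopfAlgebra C H] [StarRing H] [StarModule C H]
    [Ring A] [Algebra C A] [StarRing A] [StarModule C A]
    (Δ : SweedlerRep C H) (act : H → A → A) (a : H → A) : Prop :=
  memGL Δ act a ∧
  ∀ g : H,
    ((Δ.rep g).map fun p =>
        a p.1 * star (a (star (HopfAlgebra.antipode (R := C) p.2)))).sum
      = Coalgebra.counit (R := C) g • (1 : A)

/-- `U(H, A)` is a subgroup of `GL(H, A)`: it contains the unit and is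
closed under convolution and under inversion. -/
theorem memU_subgroup
    {C H A : Type*} [CommRing C] [StarRing C]
    [Ring H] [HopfAlgebra C H] [StarRing H] [StarModule C H]
    [Ring A] [Algebra C A] [StarRing A] [StarModule C A]
    (Δ : SweedlerRep C H)
    -- Hopf `*`-algebra conditions
    (hcomul_star : ∀ g : H, Coalgebra.comul (R := C) (star g)
      = ((Δ.rep g).map fun p => star p.1 ⊗ₜ[C] star p.2).sum)
    (hcounit_star : ∀ g : H,
      Coalgebra.counit (R := C) (star g) = star (Coalgebra.counit (R := C) g))
    (hS : ∀ g : H,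
      star (HopfAlgebra.antipode (R := C)
        (star (HopfAlgebra.antipode (R := C) g))) = g)
    -- the antipode is invertible with inverse `Sinv`
    (Sinv : H → H)
    (hSinv₁ : ∀ g : H, Sinv (HopfAlgebra.antipode (R := C) g) = g)
    (hSinv₂ : ∀ g : H, HopfAlgebra.antipode (R := C) (Sinv g) = g)
    -- `act` is a `*`-action of `H` on the unital `*`-algebra `A`
    (act : H → A → A)
    (hact_one : ∀ a, act 1 a = a)
    (hact_mulH : ∀ g h a, act (g * h) a = act g (act h a))
    (hact_lin : ∀ a : A, IsLinearMap C fun g => act g a)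
    (hact_linA : ∀ g : H, IsLinearMap C (act g))
    (hact_alg : ∀ (g : H) (a b : A), act g (a * b) =
      ((Δ.rep g).map fun p => act p.1 a * act p.2 b).sum)
    (hact_star : ∀ g a, star (act g a) =
      act (star (HopfAlgebra.antipode (R := C) g)) (star a))
    (hact_unit : ∀ g : H, act g (1 : A) = Coalgebra.counit (R := C) g • (1 : A)) :
    memU Δ act (convUnit C A) ∧
    (∀ a b : H → A, memU Δ act a → memU Δ act b → memU Δ act (conv Δ a b)) ∧
    (∀ a : H → A, memU Δ act a → memU Δ act (convInv Δ act Sinv a)) := by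
  have lin_e : IsLinearMap C (convUnit C A) :=
    ⟨fun (x y : H) => by simp only [convUnit, map_add, add_smul],
     fun (c : C) (x : H) => by simp only [convUnit, map_smul, smul_eq_mul, mul_smul]⟩
  -- the rep-transport for `θ g = star (antipode g)`
  have theta_trans : ∀ (k : H) (f : H → H → A)
      (h1 : ∀ y, IsLinearMap C fun x => f x y)
      (h2 : ∀ x, IsLinearMap C fun y => f x y),
      ((Δ.rep (star (HopfAlgebra.antipode (R := C) k : H))).map
          fun p => f p.1 p.2).sum
        = ((Δ.rep k).map fun p =>
            f (star (HopfAlgebra.antipode (R := C) p.2 : H))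
              (star (HopfAlgebra.antipode (R := C) p.1 : H))).sum := by
    intro k f h1 h2
    have hL : Coalgebra.comul (R := C) (star (HopfAlgebra.antipode (R := C) k : H))
        = (((Δ.rep k).map fun p =>
            ((star (HopfAlgebra.antipode (R := C) p.2 : H)),
              (star (HopfAlgebra.antipode (R := C) p.1 : H)))).map
          fun v => v.1 ⊗ₜ[C] v.2).sum := by
      rw [comul_theta_rep Δ hcomul_star k, List.map_map]
      rfl
    rw [rep_trans Δ hL f h1 h2, List.map_map]
    rfl
  -- θ (θ k) = k
  have theta_theta : ∀ k : H,
      star (HopfAlgebra.antipode (R := C)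
        (star (HopfAlgebra.antipode (R := C) k : H)) : H) = k := hS
  -- Part 1 : the unit is in U
  have part1 : memU Δ act (convUnit C A) := by
    refine ⟨⟨lin_e, ?_, ?_, ?_⟩, ?_⟩
    · show Coalgebra.counit (R := C) (1 : H) • (1 : A) = 1
      rw [Bialgebra.counit_one, one_smul]
    · intro g h
      show Coalgebra.counit (R := C) (g * h) • (1 : A) = _
      have step : ((Δ.rep g).map fun p => convUnit C A p.1 * act p.2 (convUnit C A h)).sum
          = ((Δ.rep g).map fun p => Coalgebra.counit (R := C) p.1 •
              (Coalgebra.counit (R := C) h • (Coalgebra.counit (R := C) p.2 • (1 : A)))).sum :=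
        msum_congr fun p _ => by
          show (Coalgebra.counit (R := C) p.1 • (1 : A)) *
              act p.2 (Coalgebra.counit (R := C) h • (1 : A)) = _
          rw [(hact_linA p.2).map_smul, hact_unit, smul_mul_assoc, one_mul]
      rw [step, repε_l Δ g
          (fun w => Coalgebra.counit (R := C) h • (Coalgebra.counit (R := C) w • (1 : A)))
          ⟨fun u v => by simp only [map_add, add_smul, smul_add],
           fun c u => by simp only [map_smul, smul_eq_mul, mul_smul]
                         rw [smul_comm (Coalgebra.counit (R := C) h) c]⟩,
        Bialgebra.counit_mul, mul_comm, mul_smul]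
    · intro g b
      have l1 : ((Δ.rep g).map fun p => act p.1 b * convUnit C A p.2).sum = act g b := by
        rw [show ((Δ.rep g).map fun p => act p.1 b * convUnit C A p.2).sum
            = ((Δ.rep g).map fun p => Coalgebra.counit (R := C) p.2 • act p.1 b).sum from
          msum_congr fun p _ => by
            show act p.1 b * (Coalgebra.counit (R := C) p.2 • (1 : A)) = _
            rw [mul_smul_comm, mul_one]]
        exact repε_r Δ g (fun w => act w b) (hact_lin b)
      have l2 : ((Δ.rep g).map fun p => convUnit C A p.1 * act p.2 b).sum = act g b := by
        rw [show ((Δ.rep g).map fun p => convUnit C A p.1 * act p.2 b).sum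
            = ((Δ.rep g).map fun p => Coalgebra.counit (R := C) p.1 • act p.2 b).sum from
          msum_congr fun p _ => by
            show (Coalgebra.counit (R := C) p.1 • (1 : A)) * act p.2 b = _
            rw [smul_mul_assoc, one_mul]]
        exact repε_l Δ g (fun w => act w b) (hact_lin b)
      rw [l1, l2]
    · intro g
      rw [show ((Δ.rep g).map fun p => convUnit C A p.1 *
            star (convUnit C A (star (HopfAlgebra.antipode (R := C) p.2)))).sum
          = ((Δ.rep g).map fun p => Coalgebra.counit (R := C) p.1 •
              (Coalgebra.counit (R := C) p.2 • (1 : A))).sum from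
        msum_congr fun p _ => by
          show (Coalgebra.counit (R := C) p.1 • (1 : A)) *
              star (Coalgebra.counit (R := C)
                (star (HopfAlgebra.antipode (R := C) p.2 : H)) • (1 : A)) = _
          rw [hcounit_star, star_smul, star_star, star_one,
            counit_antipode' Δ p.2, smul_mul_assoc, one_mul]]
      exact repε_l Δ g (fun w => Coalgebra.counit (R := C) w • (1 : A))
        ⟨fun u v => by simp only [map_add, add_smul],
         fun c u => by simp only [map_smul, smul_eq_mul, mul_smul]⟩
  refine ⟨part1, ?_, ?_⟩
  -- Part 2 : closure under convolution
  · intro a b ha hb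
    obtain ⟨⟨haLin, ha1, haAct, haMod⟩, haU⟩ := ha
    obtain ⟨⟨hbLin, hb1, hbAct, hbMod⟩, hbU⟩ := hb
    have habLin : IsLinearMap C (cnvB Δ a b) := cnv_lin Δ haLin hbLin
    -- daggers
    have lin_adag : IsLinearMap C fun x : H =>
        star (a (star (HopfAlgebra.antipode (R := C) x : H))) :=
      ⟨fun u v => by simp only [map_add, star_add, haLin.map_add],
       fun c u => by simp only [map_smul, star_smul, haLin.map_smul, star_star]⟩
    have lin_bdag : IsLinearMap C fun x : H =>
        star (b (star (HopfAlgebra.antipode (R := C) x : H))) :=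
      ⟨fun u v => by simp only [map_add, star_add, hbLin.map_add],
       fun c u => by simp only [map_smul, star_smul, hbLin.map_smul, star_star]⟩
    refine ⟨⟨habLin, ?_, ?_, ?_⟩, ?_⟩
    · show ((Δ.rep (1 : H)).map fun p => a p.1 * b p.2).sum = 1
      rw [rep_one Δ (fun x y => a x * b y)
        (fun y => lin_mul_right haLin (b y)) (fun x => lin_mul_left hbLin (a x)),
        ha1, hb1, one_mul]
    · -- action condition
      intro g h
      show cnvB Δ a b (g * h)
        = cnvB Δ (cnvB Δ a b) (fun z => act z (cnvB Δ a b h)) g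
      have step0 : cnvB Δ a b (g * h)
          = ((Δ.rep h).map fun t =>
              cnvB Δ (fun x => a (x * t.1)) (fun x => b (x * t.2)) g).sum := by
        show ((Δ.rep (g * h)).map fun p => a p.1 * b p.2).sum = _
        rw [rep_mul Δ g h (fun x y => a x * b y)
          (fun y => lin_mul_right haLin (b y)) (fun x => lin_mul_left hbLin (a x)),
          sum_comm']
        rfl
      rw [step0]
      have step1 : ∀ t : H × H,
          cnvB Δ (fun x => a (x * t.1)) (fun x => b (x * t.2)) g
            = cnvB Δ (cnvB Δ a b) (fun z => act z (a t.1 * b t.2)) g := by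
        intro t
        have lτ₁ : IsLinearMap C fun z : H => act z (a t.1) := hact_lin _
        have lτ₂ : IsLinearMap C fun z : H => act z (b t.2) := hact_lin _
        calc cnvB Δ (fun x => a (x * t.1)) (fun x => b (x * t.2)) g
            = cnvB Δ (cnvB Δ a fun z => act z (a t.1)) (fun x => b (x * t.2)) g :=
              cnv_congr_l Δ _ _ _ (fun x => haAct x t.1) g
          _ = cnvB Δ (cnvB Δ a fun z => act z (a t.1))
                (cnvB Δ b fun z => act z (b t.2)) g :=
              cnv_congr_r Δ _ _ _ (fun x => hbAct x t.2) g
          _ = cnvB Δ a (cnvB Δ (fun z => act z (a t.1))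
                (cnvB Δ b fun z => act z (b t.2))) g :=
              cnv_assoc Δ _ _ _ haLin lτ₁ (cnv_lin Δ hbLin lτ₂) g
          _ = cnvB Δ a (cnvB Δ (cnvB Δ (fun z => act z (a t.1)) b)
                (fun z => act z (b t.2))) g :=
              cnv_congr_r Δ _ _ _ (fun x => (cnv_assoc Δ _ _ _ lτ₁ hbLin lτ₂ x).symm) g
          _ = cnvB Δ a (cnvB Δ (cnvB Δ b fun z => act z (a t.1))
                (fun z => act z (b t.2))) g :=
              cnv_congr_r Δ _ _ _
                (fun x => cnv_congr_l Δ _ _ _ (fun z => hbMod z (a t.1)) x) g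
          _ = cnvB Δ a (cnvB Δ b (cnvB Δ (fun z => act z (a t.1))
                (fun z => act z (b t.2)))) g :=
              cnv_congr_r Δ _ _ _ (fun x => cnv_assoc Δ _ _ _ hbLin lτ₁ lτ₂ x) g
          _ = cnvB Δ (cnvB Δ a b) (cnvB Δ (fun z => act z (a t.1))
                (fun z => act z (b t.2))) g :=
              (cnv_assoc Δ _ _ _ haLin hbLin (cnv_lin Δ lτ₁ lτ₂) g).symm
          _ = cnvB Δ (cnvB Δ a b) (fun z => act z (a t.1 * b t.2)) g :=
              cnv_congr_r Δ _ _ _ (fun z => (hact_alg z (a t.1) (b t.2)).symm) g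
      rw [show ((Δ.rep h).map fun t =>
            cnvB Δ (fun x => a (x * t.1)) (fun x => b (x * t.2)) g).sum
          = ((Δ.rep h).map fun t =>
            cnvB Δ (cnvB Δ a b) (fun z => act z (a t.1 * b t.2)) g).sum from
        msum_congr fun t _ => step1 t]
      -- sum over t, using additivity in the act-slot
      have φadd : ∀ u v : A,
          cnvB Δ (cnvB Δ a b) (fun z => act z (u + v)) g
            = cnvB Δ (cnvB Δ a b) (fun z => act z u) g
              + cnvB Δ (cnvB Δ a b) (fun z => act z v) g := by
        intro u v
        show ((Δ.rep g).map fun p => cnvB Δ a b p.1 * act p.2 (u + v)).sum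
          = ((Δ.rep g).map fun p => cnvB Δ a b p.1 * act p.2 u).sum
            + ((Δ.rep g).map fun p => cnvB Δ a b p.1 * act p.2 v).sum
        rw [← sum_map_add']
        exact msum_congr fun p _ => by
          rw [(hact_linA p.2).map_add, mul_add]
      have := map_list_sum (AddMonoidHom.mk'
          (fun u => cnvB Δ (cnvB Δ a b) (fun z => act z u) g) φadd)
          ((Δ.rep h).map fun t => a t.1 * b t.2)
      rw [List.map_map] at this
      exact this.symm
    · -- module condition
      intro g b'
      show cnvB Δ (fun z => act z b') (cnvB Δ a b) g
        = cnvB Δ (cnvB Δ a b) (fun z => act z b') g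
      have lτ : IsLinearMap C fun z : H => act z b' := hact_lin b'
      calc cnvB Δ (fun z => act z b') (cnvB Δ a b) g
          = cnvB Δ (cnvB Δ (fun z => act z b') a) b g :=
            (cnv_assoc Δ _ _ _ lτ haLin hbLin g).symm
        _ = cnvB Δ (cnvB Δ a fun z => act z b') b g :=
            cnv_congr_l Δ _ _ _ (fun x => haMod x b') g
        _ = cnvB Δ a (cnvB Δ (fun z => act z b') b) g :=
            cnv_assoc Δ _ _ _ haLin lτ hbLin g
        _ = cnvB Δ a (cnvB Δ b fun z => act z b') g :=
            cnv_congr_r Δ _ _ _ (fun x => hbMod x b') g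
        _ = cnvB Δ (cnvB Δ a b) (fun z => act z b') g :=
            (cnv_assoc Δ _ _ _ haLin hbLin lτ g).symm
    · -- unitarity
      intro g
      have dag_eq : ∀ x : H,
          star (cnvB Δ a b (star (HopfAlgebra.antipode (R := C) x : H)))
            = cnvB Δ (fun z => star (b (star (HopfAlgebra.antipode (R := C) z : H))))
                (fun z => star (a (star (HopfAlgebra.antipode (R := C) z : H)))) x := by
        intro x
        show star (((Δ.rep (star (HopfAlgebra.antipode (R := C) x : H))).map
            fun p => a p.1 * b p.2).sum) = _
        rw [theta_trans x (fun u v => a u * b v)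
          (fun y => lin_mul_right haLin (b y)) (fun u => lin_mul_left hbLin (a u))]
        rw [star_msum, List.map_map]
        exact msum_congr fun p _ => by
          show star (a (star (HopfAlgebra.antipode (R := C) p.2 : H))
              * b (star (HopfAlgebra.antipode (R := C) p.1 : H))) = _
          rw [star_mul]
      show cnvB Δ (cnvB Δ a b)
          (fun z => star (cnvB Δ a b (star (HopfAlgebra.antipode (R := C) z : H)))) g
        = Coalgebra.counit (R := C) g • (1 : A)
      calc cnvB Δ (cnvB Δ a b)
            (fun z => star (cnvB Δ a b (star (HopfAlgebra.antipode (R := C) z : H)))) g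
          = cnvB Δ (cnvB Δ a b) (cnvB Δ
              (fun z => star (b (star (HopfAlgebra.antipode (R := C) z : H))))
              (fun z => star (a (star (HopfAlgebra.antipode (R := C) z : H))))) g :=
            cnv_congr_r Δ _ _ _ dag_eq g
        _ = cnvB Δ a (cnvB Δ b (cnvB Δ
              (fun z => star (b (star (HopfAlgebra.antipode (R := C) z : H))))
              (fun z => star (a (star (HopfAlgebra.antipode (R := C) z : H)))))) g :=
            cnv_assoc Δ _ _ _ haLin hbLin (cnv_lin Δ lin_bdag lin_adag) g
        _ = cnvB Δ a (cnvB Δ (cnvB Δ b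
              (fun z => star (b (star (HopfAlgebra.antipode (R := C) z : H)))))
              (fun z => star (a (star (HopfAlgebra.antipode (R := C) z : H))))) g :=
            cnv_congr_r Δ _ _ _
              (fun x => (cnv_assoc Δ _ _ _ hbLin lin_bdag lin_adag x).symm) g
        _ = cnvB Δ a (cnvB Δ (fun z => Coalgebra.counit (R := C) z • (1 : A))
              (fun z => star (a (star (HopfAlgebra.antipode (R := C) z : H))))) g :=
            cnv_congr_r Δ _ _ _
              (fun x => cnv_congr_l Δ _ _ _ (fun z => hbU z) x) g
        _ = cnvB Δ a
              (fun z => star (a (star (HopfAlgebra.antipode (R := C) z : H)))) g :=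
            cnv_congr_r Δ _ _ _ (fun x => cnv_unit_l Δ lin_adag x) g
        _ = Coalgebra.counit (R := C) g • (1 : A) := haU g
  -- Part 3 : closure under inversion
  · intro a ha
    obtain ⟨⟨haLin, ha1, haAct, haMod⟩, haU⟩ := ha
    have lS : IsLinearMap C Sinv := sinv_lin (C := C) Δ Sinv hSinv₁ hSinv₂
    have linΘ : IsLinearMap C (convInv Δ act Sinv a) :=
      lin_repsum Δ (fun x y => act y (a (Sinv x)))
        (fun y => ⟨fun u v => by
            simp only [lS.map_add, haLin.map_add, (hact_linA y).map_add],
          fun c u => by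
            simp only [lS.map_smul, haLin.map_smul, (hact_linA y).map_smul]⟩)
        (fun x => hact_lin _)
    have lin_adag : IsLinearMap C fun x : H =>
        star (a (star (HopfAlgebra.antipode (R := C) x : H))) :=
      ⟨fun u v => by simp only [map_add, star_add, haLin.map_add],
       fun c u => by simp only [map_smul, star_smul, haLin.map_smul, star_star]⟩
    -- (i) : Θa ⋆ a = e
    have hinv : ∀ g : H, cnvB Δ (convInv Δ act Sinv a) a g
        = Coalgebra.counit (R := C) g • (1 : A) := by
      intro g
      show ((Δ.rep g).map fun p =>
          (((Δ.rep p.1).map fun q => act q.2 (a (Sinv q.1))).sum) * a p.2).sum = _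
      rw [show ((Δ.rep g).map fun p =>
            (((Δ.rep p.1).map fun q => act q.2 (a (Sinv q.1))).sum) * a p.2).sum
          = ((Δ.rep g).map fun p =>
            ((Δ.rep p.1).map fun q => act q.2 (a (Sinv q.1)) * a p.2).sum).sum from
        msum_congr fun p _ => (List.sum_map_mul_right _ _ _).symm]
      rw [E1 Δ g (fun x y z => act y (a (Sinv x)) * a z)
        (fun y z => lin_mul_right ⟨fun u v => by
            simp only [lS.map_add, haLin.map_add, (hact_linA y).map_add],
          fun c u => by
            simp only [lS.map_smul, haLin.map_smul, (hact_linA y).map_smul]⟩ _)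
        (fun x z => lin_mul_right (hact_lin _) _)
        (fun x y => lin_mul_left haLin _)]
      rw [show ((Δ.rep g).map fun p =>
            ((Δ.rep p.2).map fun q => act q.1 (a (Sinv p.1)) * a q.2).sum).sum
          = ((Δ.rep g).map fun p => a (p.2 * Sinv p.1)).sum from
        msum_congr fun p _ => by rw [haMod p.2 (a (Sinv p.1)), ← haAct p.2 (Sinv p.1)]]
      rw [repSinv_r_f (C := C) Δ Sinv hSinv₁ hSinv₂ g a haLin, ha1]
    -- the dagger map in GL
    have dMod : ∀ (g : H) (b' : A),
        ((Δ.rep g).map fun p => act p.1 b' *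
          star (a (star (HopfAlgebra.antipode (R := C) p.2 : H)))).sum
        = ((Δ.rep g).map fun p =>
          star (a (star (HopfAlgebra.antipode (R := C) p.1 : H))) * act p.2 b').sum := by
      intro g b'
      have h := haMod (star (HopfAlgebra.antipode (R := C) g : H)) (star b')
      rw [theta_trans g (fun u v => act u (star b') * a v)
          (fun y => lin_mul_right (hact_lin _) _)
          (fun x => lin_mul_left haLin _),
        theta_trans g (fun u v => a u * act v (star b'))
          (fun y => lin_mul_right haLin _)
          (fun x => lin_mul_left (hact_lin _) _)] at h
      have h2 := congrArg (star : A → A) h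
      rw [star_msum, List.map_map, star_msum, List.map_map] at h2
      rw [show ((Δ.rep g).map ((fun x => star x) ∘ fun p =>
            act (star (HopfAlgebra.antipode (R := C) p.2 : H)) (star b')
              * a (star (HopfAlgebra.antipode (R := C) p.1 : H)))).sum
          = ((Δ.rep g).map fun p =>
            star (a (star (HopfAlgebra.antipode (R := C) p.1 : H))) * act p.2 b').sum from
        msum_congr fun p _ => by
          show star (act (star (HopfAlgebra.antipode (R := C) p.2 : H)) (star b')
              * a (star (HopfAlgebra.antipode (R := C) p.1 : H))) = _
          rw [star_mul, hact_star, theta_theta, star_star]] at h2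
      rw [show ((Δ.rep g).map ((fun x => star x) ∘ fun p =>
            a (star (HopfAlgebra.antipode (R := C) p.2 : H))
              * act (star (HopfAlgebra.antipode (R := C) p.1 : H)) (star b'))).sum
          = ((Δ.rep g).map fun p => act p.1 b' *
            star (a (star (HopfAlgebra.antipode (R := C) p.2 : H)))).sum from
        msum_congr fun p _ => by
          show star (a (star (HopfAlgebra.antipode (R := C) p.2 : H))
              * act (star (HopfAlgebra.antipode (R := C) p.1 : H)) (star b')) = _
          rw [star_mul, hact_star, theta_theta, star_star]] at h2
      exact h2.symm
    have d1 : star (a (star (HopfAlgebra.antipode (R := C) (1 : H) : H))) = 1 := by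
      rw [antipode_one' Δ, star_one, ha1, star_one]
    have dAct : ∀ g h : H,
        star (a (star (HopfAlgebra.antipode (R := C) (g * h) : H)))
          = ((Δ.rep g).map fun p =>
              star (a (star (HopfAlgebra.antipode (R := C) p.1 : H))) *
                act p.2 (star (a (star (HopfAlgebra.antipode (R := C) h : H))))).sum := by
      intro g h
      have hθmul : star (HopfAlgebra.antipode (R := C) (g * h) : H)
          = star (HopfAlgebra.antipode (R := C) g : H)
            * star (HopfAlgebra.antipode (R := C) h : H) := by
        rw [antipode_antimul Δ, star_mul]
      rw [hθmul, haAct (star (HopfAlgebra.antipode (R := C) g : H))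
        (star (HopfAlgebra.antipode (R := C) h : H))]
      rw [theta_trans g (fun u v => a u *
          act v (a (star (HopfAlgebra.antipode (R := C) h : H))))
        (fun y => lin_mul_right haLin _)
        (fun x => lin_mul_left (hact_lin _) _)]
      rw [star_msum, List.map_map]
      rw [show ((Δ.rep g).map ((fun x => star x) ∘ fun p =>
            a (star (HopfAlgebra.antipode (R := C) p.2 : H)) *
              act (star (HopfAlgebra.antipode (R := C) p.1 : H))
                (a (star (HopfAlgebra.antipode (R := C) h : H))))).sum
          = ((Δ.rep g).map fun p =>
            act p.1 (star (a (star (HopfAlgebra.antipode (R := C) h : H)))) *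
              star (a (star (HopfAlgebra.antipode (R := C) p.2 : H)))).sum from
        msum_congr fun p _ => by
          show star (a (star (HopfAlgebra.antipode (R := C) p.2 : H)) *
              act (star (HopfAlgebra.antipode (R := C) p.1 : H))
                (a (star (HopfAlgebra.antipode (R := C) h : H)))) = _
          rw [star_mul, hact_star, theta_theta]]
      exact dMod g (star (a (star (HopfAlgebra.antipode (R := C) h : H))))
    -- monoid argument : Θa = a†
    have hda : ∀ x : H,
        star (a (star (HopfAlgebra.antipode (R := C) x : H)))
          = convInv Δ act Sinv a x := by
      intro x
      calc star (a (star (HopfAlgebra.antipode (R := C) x : H)))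
          = cnvB Δ (fun z => Coalgebra.counit (R := C) z • (1 : A))
              (fun z => star (a (star (HopfAlgebra.antipode (R := C) z : H)))) x :=
            (cnv_unit_l Δ lin_adag x).symm
        _ = cnvB Δ (cnvB Δ (convInv Δ act Sinv a) a)
              (fun z => star (a (star (HopfAlgebra.antipode (R := C) z : H)))) x :=
            cnv_congr_l Δ _ _ _ (fun z => (hinv z).symm) x
        _ = cnvB Δ (convInv Δ act Sinv a) (cnvB Δ a
              (fun z => star (a (star (HopfAlgebra.antipode (R := C) z : H))))) x :=
            cnv_assoc Δ _ _ _ linΘ haLin lin_adag x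
        _ = cnvB Δ (convInv Δ act Sinv a)
              (fun z => Coalgebra.counit (R := C) z • (1 : A)) x :=
            cnv_congr_r Δ _ _ _ (fun z => haU z) x
        _ = convInv Δ act Sinv a x := cnv_unit_r Δ linΘ x
    have hfun : convInv Δ act Sinv a
        = fun x => star (a (star (HopfAlgebra.antipode (R := C) x : H))) :=
      funext fun x => (hda x).symm
    constructor
    · rw [hfun]
      exact ⟨lin_adag, d1, dAct, dMod⟩
    · intro g
      rw [hfun]
      rw [show ((Δ.rep g).map fun p =>
            star (a (star (HopfAlgebra.antipode (R := C) p.1 : H))) *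
              star ((fun x => star (a (star (HopfAlgebra.antipode (R := C) x : H))))
                (star (HopfAlgebra.antipode (R := C) p.2 : H)))).sum
          = ((Δ.rep g).map fun p => convInv Δ act Sinv a p.1 * a p.2).sum from
        msum_congr fun p _ => by
          show star (a (star (HopfAlgebra.antipode (R := C) p.1 : H))) *
              star (star (a (star (HopfAlgebra.antipode (R := C)
                (star (HopfAlgebra.antipode (R := C) p.2 : H)) : H)))) = _
          rw [theta_theta, star_star, hda]]
      exact hinv g
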